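/- Let F_q be a finite field of q = p^r elements, m ≥ 0, and z ∈ F_q. The number of multisets of m nonzero elements of F_q summing to z equals (1/q)·C(q+m−2, m) + D_m(z), where D_m(z) = 0 if m ≢ 0, 1 (mod p); D_m(0) = ((q−1)/q)·C(q/p−1+j, j) and D_m(z) = −(1/q)·C(q/p−1+j, j) for z ≠ 0 when m = jp with j ≥ 0; and D_m(0) = −((q−1)/q)·C(q/p−1+j, j) and D_m(z) = (1/q)·C(q/p−1+j, j) for z ≠ 0 when m = jp+1 with j ≥ 0. -/

import Mathlib

/-- The number of multisets of `m` nonzero elements of `F` whose sum is `z`. -/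
def partitionCount (F : Type*) [Field F] [Fintype F] [DecidableEq F]
    (m : ℕ) (z : F) : ℕ :=
  (Finset.univ.filter
    (fun s : Sym F m => (0 : F) ∉ (s : Multiset F) ∧ (s : Multiset F).sum = z)).card

open Finset PowerSeries Polynomial

namespace PartitionCountAux

/-! ### Power series preliminaries -/

lemma geom_mul (a : ℂ) :
    (PowerSeries.mk fun k => a ^ k) * (1 - PowerSeries.C a * PowerSeries.X) = 1 := by
  have : (PowerSeries.mk fun k => a ^ k) * (1 - PowerSeries.C a * PowerSeries.X)
      = (PowerSeries.mk fun k => a ^ k)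
        - ((PowerSeries.mk fun k => a ^ k) * PowerSeries.C a) * PowerSeries.X := by
    ring
  rw [this]
  ext n
  cases n with
  | zero => simp
  | succ n =>
    simp [PowerSeries.coeff_succ_mul_X, PowerSeries.coeff_mul_C, pow_succ, mul_comm]

noncomputable def Dser (p t : ℕ) : PowerSeries ℂ :=
  PowerSeries.mk fun m => if p ∣ m then ((t + m / p).choose (m / p) : ℂ) else 0

lemma Dser_mul_step (p t : ℕ) (hp : 1 < p) :
    Dser p (t + 1) * (1 - PowerSeries.X ^ p) = Dser p t := by
  have key : Dser p (t+1) * (1 - PowerSeries.X ^ p)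
      = Dser p (t+1) - Dser p (t+1) * PowerSeries.X ^ p := by ring
  rw [key]
  ext n
  rw [map_sub, PowerSeries.coeff_mul_X_pow']
  simp only [Dser, PowerSeries.coeff_mk]
  by_cases hd : p ∣ n
  · rcases hd with ⟨j, rfl⟩
    have hj : p * j / p = j := Nat.mul_div_cancel_left j (by omega)
    rcases Nat.eq_zero_or_pos j with rfl | hjpos
    · have h1 : ¬ p ≤ p * 0 := by omega
      have h0 : p ∣ p * 0 := Dvd.intro 0 rfl
      simp [hj, h1, h0]
      omega
    · obtain ⟨j', rfl⟩ : ∃ j', j = j' + 1 := ⟨j - 1, by omega⟩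
      have hmul : p * (j' + 1) = p * j' + p := Nat.mul_succ p j'
      have hle : p ≤ p * (j' + 1) := by omega
      have hsub : p * (j' + 1) - p = p * j' := by omega
      have hdvd2 : p ∣ p * (j' + 1) - p := by rw [hsub]; exact Dvd.intro j' rfl
      have hj2 : (p * (j' + 1) - p) / p = j' := by
        rw [hsub]; exact Nat.mul_div_cancel_left j' (by omega)
      simp only [if_pos (Dvd.intro (j' + 1) rfl : p ∣ p * (j' + 1)), if_pos hle,
        if_pos hdvd2, hj, hj2]
      have pas : (t + 1 + (j' + 1)).choose (j' + 1)
          = (t + 1 + j').choose j' + (t + (j' + 1)).choose (j' + 1) := by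
        have h1 : t + 1 + (j' + 1) = (t + (j' + 1)) + 1 := by omega
        have h2 : t + (j' + 1) = t + 1 + j' := by omega
        rw [h1, Nat.choose_succ_succ', ← h2]
      rw [pas]
      push_cast
      ring
  · have h2 : ¬ (p ≤ n ∧ p ∣ n - p) := by
      rintro ⟨h1, j, hj⟩
      exact hd ⟨j + 1, by rw [Nat.mul_succ]; omega⟩
    by_cases hle : p ≤ n
    · have : ¬ p ∣ n - p := fun h => h2 ⟨hle, h⟩
      simp [hd, hle, this]
    · simp [hd, hle]

lemma Dser_mul_pow (p t : ℕ) (hp : 1 < p) :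
    Dser p t * (1 - PowerSeries.X ^ p) ^ (t + 1) = 1 := by
  induction t with
  | zero =>
    rw [pow_one]
    have h0 : Dser p 0 * (1 - PowerSeries.X ^ p)
        = Dser p 0 - Dser p 0 * PowerSeries.X ^ p := by ring
    rw [h0]
    ext n
    rw [map_sub, PowerSeries.coeff_mul_X_pow']
    simp only [Dser, PowerSeries.coeff_mk, zero_add]
    by_cases hn : n = 0
    · subst hn
      have : ¬ p ≤ 0 := by omega
      simp [this]
    · rw [PowerSeries.coeff_one, if_neg hn]
      by_cases hd : p ∣ n
      · have hle : p ≤ n := Nat.le_of_dvd (by omega) hd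
        have hd2 : p ∣ n - p := (Nat.dvd_sub hd dvd_rfl)
        simp [hd, hle, hd2, Nat.choose_self]
      · have h2 : ¬ (p ∣ n - p) ∨ ¬ p ≤ n := by
          by_cases hle : p ≤ n
          · left; intro h
            rcases h with ⟨j, hj⟩
            exact hd ⟨j + 1, by rw [Nat.mul_succ]; omega⟩
          · right; exact hle
        rcases h2 with h2 | h2 <;> by_cases hle : p ≤ n <;> simp_all
  | succ t ih =>
    rw [pow_succ']
    calc Dser p (t+1) * ((1 - PowerSeries.X ^ p) * (1 - PowerSeries.X ^ p) ^ (t+1))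
        = (Dser p (t+1) * (1 - PowerSeries.X ^ p)) * (1 - PowerSeries.X ^ p) ^ (t+1) := by ring
      _ = Dser p t * (1 - PowerSeries.X ^ p) ^ (t+1) := by rw [Dser_mul_step p t hp]
      _ = 1 := ih

/-! ### Roots of unity -/

lemma eval_prod_one_sub (p : ℕ) (hp : p.Prime) (x : ℂ) :
    ∏ ζ ∈ Polynomial.nthRootsFinset p (1 : ℂ), (1 - ζ * x) = 1 - x ^ p := by
  obtain ⟨ζ₀, hζ₀⟩ : ∃ ζ₀ : ℂ, IsPrimitiveRoot ζ₀ p :=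
    ⟨Complex.exp (2 * Real.pi * Complex.I / p), Complex.isPrimitiveRoot_exp p hp.ne_zero⟩
  have hXp : ∀ y : ℂ, y ^ p - 1 = ∏ ζ ∈ Polynomial.nthRootsFinset p (1 : ℂ), (y - ζ) := by
    intro y
    have := Polynomial.X_pow_sub_one_eq_prod (R := ℂ) hp.pos hζ₀
    have := congrArg (Polynomial.eval y) this
    simpa [Polynomial.eval_prod] using this
  have hne : ∀ ζ ∈ Polynomial.nthRootsFinset p (1 : ℂ), ζ ≠ 0 := by
    intro ζ hζ
    have := (Polynomial.mem_nthRootsFinset hp.pos 1).1 hζ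
    intro h; rw [h] at this; simp [zero_pow hp.ne_zero] at this
  have h0 : ∏ ζ ∈ Polynomial.nthRootsFinset p (1 : ℂ), (-ζ) = -1 := by
    have := hXp 0
    simp only [zero_pow hp.ne_zero, zero_sub] at this
    exact this.symm
  have hinv : ∏ ζ ∈ Polynomial.nthRootsFinset p (1 : ℂ), (x - ζ⁻¹)
      = ∏ ζ ∈ Polynomial.nthRootsFinset p (1 : ℂ), (x - ζ) := by
    refine Finset.prod_bij' (fun ζ _ => ζ⁻¹) (fun ζ _ => ζ⁻¹) ?_ ?_ ?_ ?_ ?_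
    · intro a ha
      rw [Polynomial.mem_nthRootsFinset hp.pos] at ha ⊢
      rw [inv_pow, ha, inv_one]
    · intro a ha
      rw [Polynomial.mem_nthRootsFinset hp.pos] at ha ⊢
      rw [inv_pow, ha, inv_one]
    · intro a _; exact inv_inv a
    · intro a _; exact inv_inv a
    · intro a _; rfl
  calc ∏ ζ ∈ Polynomial.nthRootsFinset p (1 : ℂ), (1 - ζ * x)
      = ∏ ζ ∈ Polynomial.nthRootsFinset p (1 : ℂ), ((-ζ) * (x - ζ⁻¹)) := by
        apply Finset.prod_congr rfl
        intro ζ hζ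
        field_simp [hne ζ hζ]
        ring
    _ = (∏ ζ ∈ Polynomial.nthRootsFinset p (1 : ℂ), (-ζ))
        * ∏ ζ ∈ Polynomial.nthRootsFinset p (1 : ℂ), (x - ζ⁻¹) := Finset.prod_mul_distrib
    _ = (-1) * (x ^ p - 1) := by rw [h0, hinv, ← hXp]
    _ = 1 - x ^ p := by ring

lemma ps_prod_one_sub (p : ℕ) (hp : p.Prime) :
    ∏ ζ ∈ Polynomial.nthRootsFinset p (1 : ℂ), (1 - PowerSeries.C ζ * PowerSeries.X)
      = 1 - PowerSeries.X ^ p := by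
  have hpoly : ∏ ζ ∈ Polynomial.nthRootsFinset p (1 : ℂ), (1 - Polynomial.C ζ * Polynomial.X)
      = 1 - Polynomial.X ^ p := by
    apply Polynomial.funext
    intro x
    simpa [Polynomial.eval_prod] using eval_prod_one_sub p hp x
  have := congrArg (Polynomial.coeToPowerSeries.ringHom (R := ℂ)) hpoly
  simp only [map_prod, map_sub, map_mul, map_pow, map_one,
    Polynomial.coeToPowerSeries.ringHom_apply,
    Polynomial.coe_one, Polynomial.coe_C, Polynomial.coe_X] at this
  exact this

/-! ### Character sums over `Sym` -/

variable {F : Type*} [Field F] [Fintype F] [DecidableEq F]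

lemma char_multiset_sum (ψ : AddChar F ℂ) (s : Multiset F) :
    ψ s.sum = ∏ a : F, ψ a ^ s.count a := by
  induction s using Multiset.induction_on with
  | empty => simp
  | cons x s ih =>
    rw [Multiset.sum_cons, AddChar.map_add_eq_mul, ih]
    have : ∀ a : F, (x ::ₘ s).count a = (if a = x then 1 else 0) + s.count a := by
      intro a
      rw [Multiset.count_cons]
      omega
    simp_rw [this, pow_add, Finset.prod_mul_distrib]
    congr 1
    simp [Finset.prod_ite_eq']

omit [Field F] in
lemma count_sum_eq (s : Multiset F) : ∑ a : F, s.count a = Multiset.card s := by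
  rw [← Multiset.toFinset_sum_count_eq s]
  apply (Finset.sum_subset (Finset.subset_univ _) _).symm
  intro a _ ha
  simpa [Multiset.count_eq_zero] using ha

lemma sym_sum_eq_coeff (ψ : AddChar F ℂ) (m : ℕ) :
    ∑ s : Sym F m, ψ (s : Multiset F).sum
      = PowerSeries.coeff m (∏ a : F, PowerSeries.mk fun k => ψ a ^ k) := by
  rw [PowerSeries.coeff_prod]
  simp only [PowerSeries.coeff_mk]
  have hcard : ∀ l ∈ Finset.finsuppAntidiag (Finset.univ : Finset F) m,
      Multiset.card (Finsupp.toMultiset l) = m := by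
    intro l hl
    rw [Finset.mem_finsuppAntidiag] at hl
    rw [Finsupp.card_toMultiset, Finsupp.sum]
    have h1 : ∑ a ∈ l.support, id (l a) = ∑ a : F, l a := by
      apply Finset.sum_subset (Finset.subset_univ _)
      intro a _ ha
      simpa using Finsupp.notMem_support_iff.1 ha
    rw [h1]
    exact hl.1
  refine Finset.sum_bij' (fun (s : Sym F m) _ => Multiset.toFinsupp (s : Multiset F))
    (fun (l : F →₀ ℕ) hl => (⟨Finsupp.toMultiset l, hcard l hl⟩ : Sym F m)) ?_ ?_ ?_ ?_ ?_
  · intro s _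
    rw [Finset.mem_finsuppAntidiag]
    constructor
    · show ∑ a : F, (s : Multiset F).count a = m
      rw [count_sum_eq]
      exact s.2
    · exact Finset.subset_univ _
  · intro l hl
    exact Finset.mem_univ _
  · intro s _
    apply Subtype.ext
    simp [Multiset.toFinsupp_toMultiset]
  · intro l _
    simp [Finsupp.toMultiset_toFinsupp]
  · intro s _
    rw [char_multiset_sum]
    apply Finset.prod_congr rfl
    intro a _
    rw [Multiset.toFinsupp_apply]

/-! ### Fibers of a nontrivial character -/

variable {p : ℕ} [hp : Fact p.Prime] [CharP F p]

omit [Fintype F] [DecidableEq F] hp in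
lemma char_pow_p (ψ : AddChar F ℂ) (a : F) : ψ a ^ p = 1 := by
  rw [← AddChar.map_nsmul_eq_pow]
  have : (p : ℕ) • a = 0 := by
    rw [nsmul_eq_mul, CharP.cast_eq_zero F p, zero_mul]
  rw [this, AddChar.map_zero_eq_one]

omit [Fintype F] [DecidableEq F] in
lemma char_mem_roots (ψ : AddChar F ℂ) (a : F) :
    ψ a ∈ Polynomial.nthRootsFinset p (1 : ℂ) :=
  (Polynomial.mem_nthRootsFinset hp.out.pos 1).2 (char_pow_p ψ a)

lemma fiber_card (ψ : AddChar F ℂ) (hψ : ψ ≠ 1) :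
    ∀ ζ ∈ Polynomial.nthRootsFinset p (1 : ℂ),
      (Finset.univ.filter fun a : F => ψ a = ζ).card = Fintype.card F / p := by
  obtain ⟨b, hb⟩ := AddChar.ne_one_iff.1 hψ
  have hprim : IsPrimitiveRoot (ψ b) p := by
    have hord : orderOf (ψ b) = p := orderOf_eq_prime (char_pow_p ψ b) hb
    have := IsPrimitiveRoot.orderOf (ψ b)
    rwa [hord] at this
  have hsurj : ∀ ζ ∈ Polynomial.nthRootsFinset p (1 : ℂ), ∃ b' : F, ψ b' = ζ := by
    intro ζ hζ
    have : NeZero p := ⟨hp.out.ne_zero⟩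
    obtain ⟨i, _, hi⟩ := hprim.eq_pow_of_pow_eq_one
      ((Polynomial.mem_nthRootsFinset hp.out.pos 1).1 hζ)
    exact ⟨i • b, by rw [AddChar.map_nsmul_eq_pow, hi]⟩
  have hfib : ∀ ζ ∈ Polynomial.nthRootsFinset p (1 : ℂ),
      (Finset.univ.filter fun a : F => ψ a = ζ).card
        = (Finset.univ.filter fun a : F => ψ a = 1).card := by
    intro ζ hζ
    obtain ⟨b', rfl⟩ := hsurj ζ hζ
    apply Finset.card_bij' (fun a _ => a - b') (fun a _ => a + b')
    · intro a ha
      simp only [Finset.mem_filter, Finset.mem_univ, true_and] at ha ⊢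
      rw [sub_eq_add_neg, AddChar.map_add_eq_mul, AddChar.map_neg_eq_inv, ha,
        mul_inv_cancel₀]
      intro h
      have := char_pow_p (p := p) ψ b'
      rw [h] at this
      simp [zero_pow hp.out.ne_zero] at this
    · intro a ha
      simp only [Finset.mem_filter, Finset.mem_univ, true_and] at ha ⊢
      rw [AddChar.map_add_eq_mul, ha, one_mul]
    · intro a _; ring
    · intro a _; ring
  have hcover : Fintype.card F = ∑ ζ ∈ Polynomial.nthRootsFinset p (1 : ℂ),
      (Finset.univ.filter fun a : F => ψ a = ζ).card := by
    rw [← Finset.card_univ]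
    exact Finset.card_eq_sum_card_fiberwise (fun a _ => char_mem_roots ψ a)
  have hT : (Polynomial.nthRootsFinset p (1 : ℂ)).card = p := hprim.card_nthRootsFinset
  have hsum : Fintype.card F = p * (Finset.univ.filter fun a : F => ψ a = 1).card := by
    rw [hcover, Finset.sum_congr rfl hfib, Finset.sum_const, hT, smul_eq_mul]
  intro ζ hζ
  rw [hfib ζ hζ, hsum, Nat.mul_div_cancel_left _ hp.out.pos]

omit [DecidableEq F] in
lemma card_div_pos : 1 ≤ Fintype.card F / p := by
  obtain ⟨n, hn⟩ := FiniteField.card F p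
  rw [hn.2]
  have : p ^ 1 ≤ p ^ (n : ℕ) := Nat.pow_le_pow_right hp.out.pos n.2
  rw [pow_one] at this
  exact (Nat.one_le_div_iff hp.out.pos).2 this

lemma prod_mk_eq_Dser (ψ : AddChar F ℂ) (hψ : ψ ≠ 1) :
    (∏ a : F, PowerSeries.mk fun n => ψ a ^ n) = Dser p (Fintype.card F / p - 1) := by
  set k := Fintype.card F / p with hk
  have hk1 : 1 ≤ k := card_div_pos (F := F) (p := p)
  have hgroup : (∏ a : F, PowerSeries.mk fun n => ψ a ^ n)
      = ∏ ζ ∈ Polynomial.nthRootsFinset p (1 : ℂ), (PowerSeries.mk fun n => ζ ^ n) ^ k := by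
    rw [← Finset.prod_fiberwise_of_maps_to (fun a (_ : a ∈ Finset.univ) => char_mem_roots (p := p) ψ a)
      (fun a : F => PowerSeries.mk fun n => ψ a ^ n)]
    apply Finset.prod_congr rfl
    intro ζ hζ
    have heq : ∀ a ∈ Finset.univ.filter (fun a : F => ψ a = ζ),
        (PowerSeries.mk fun n => ψ a ^ n) = (PowerSeries.mk fun n => ζ ^ n) := by
      intro a ha; rw [(Finset.mem_filter.1 ha).2]
    rw [Finset.prod_congr rfl heq, Finset.prod_const, fiber_card (p := p) ψ hψ ζ hζ]
  have hunit : (∏ a : F, PowerSeries.mk fun n => ψ a ^ n) * (1 - PowerSeries.X ^ p) ^ k = 1 := by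
    rw [hgroup, ← ps_prod_one_sub p hp.out, ← Finset.prod_pow, ← Finset.prod_mul_distrib]
    apply Finset.prod_eq_one
    intro ζ hζ
    rw [← mul_pow, geom_mul ζ, one_pow]
  have hD := Dser_mul_pow p (k-1) (hp.out.one_lt)
  rw [show k - 1 + 1 = k from by omega] at hD
  calc (∏ a : F, PowerSeries.mk fun n => ψ a ^ n)
      = (∏ a : F, PowerSeries.mk fun n => ψ a ^ n)
        * (Dser p (k-1) * (1 - PowerSeries.X ^ p) ^ k) := by rw [hD, mul_one]
    _ = Dser p (k-1) * ((∏ a : F, PowerSeries.mk fun n => ψ a ^ n)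
        * (1 - PowerSeries.X ^ p) ^ k) := by ring
    _ = Dser p (k-1) := by rw [hunit, mul_one]

/-- the "defect" count -/
def cN (p q m : ℕ) : ℕ := if p ∣ m then (q / p - 1 + m / p).choose (m / p) else 0

lemma sym_sum_nontrivial (ψ : AddChar F ℂ) (hψ : ψ ≠ 1) (m : ℕ) :
    ∑ s : Sym F m, ψ (s : Multiset F).sum = (cN p (Fintype.card F) m : ℂ) := by
  rw [sym_sum_eq_coeff, prod_mk_eq_Dser (p := p) ψ hψ]
  simp only [Dser, PowerSeries.coeff_mk, cN]
  split_ifs with h <;> simp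

omit [Field F] in
lemma card_sym (m : ℕ) : Fintype.card (Sym F m) = (Fintype.card F + m - 1).choose m := by
  rw [Sym.card_sym_eq_multichoose, Nat.multichoose_eq]

/-! ### Counting via orthogonality -/

def Qcount (F : Type*) [Field F] [Fintype F] [DecidableEq F] (m : ℕ) (z : F) : ℕ :=
  (Finset.univ.filter fun s : Sym F m => (s : Multiset F).sum = z).card

lemma orth (ψ₀ : AddChar F ℂ) (hprim : ψ₀.IsPrimitive) (w : F) :
    ∑ x : F, ψ₀ (x * w) = if w = 0 then (Fintype.card F : ℂ) else 0 := by
  classical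
  have h1 : ∀ x : F, ψ₀ (x * w) = (AddChar.mulShift ψ₀ w) x := fun x => by
    rw [AddChar.mulShift_apply, mul_comm]
  simp_rw [h1]
  rw [AddChar.sum_eq_ite]
  by_cases hw : w = 0
  · have : AddChar.mulShift ψ₀ w = 0 := by
      rw [hw, AddChar.mulShift_zero]; rfl
    rw [if_pos this, if_pos hw]
  · have : AddChar.mulShift ψ₀ w ≠ 0 := by
      rw [show (0 : AddChar F ℂ) = 1 from rfl]
      exact hprim hw
    rw [if_neg this, if_neg hw]

lemma master_Q (m : ℕ) (z : F) :
    (Fintype.card F : ℂ) * Qcount F m z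
      = ((Fintype.card F + m - 1).choose m : ℂ)
        + ((if z = 0 then (Fintype.card F : ℂ) else 0) - 1) * (cN p (Fintype.card F) m : ℂ) := by
  classical
  set ψ₀ := AddChar.FiniteField.primitiveChar_to_Complex F with hψ₀
  have hprim : ψ₀.IsPrimitive := AddChar.FiniteField.primitiveChar_to_Complex_isPrimitive F
  have horth := orth ψ₀ hprim
  have hS : ∀ x : F, x ≠ 0 →
      ∑ s : Sym F m, ψ₀ (x * (s : Multiset F).sum) = (cN p (Fintype.card F) m : ℂ) := by
    intro x hx
    have hne : AddChar.mulShift ψ₀ x ≠ 1 := hprim hx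
    have h1 : ∀ s : Sym F m, ψ₀ (x * (s : Multiset F).sum)
        = (AddChar.mulShift ψ₀ x) (s : Multiset F).sum := fun s =>
      (AddChar.mulShift_apply).symm
    simp_rw [h1]
    exact sym_sum_nontrivial (p := p) (AddChar.mulShift ψ₀ x) hne m
  have hS0 : ∑ s : Sym F m, ψ₀ ((0 : F) * (s : Multiset F).sum)
      = ((Fintype.card F + m - 1).choose m : ℂ) := by
    simp only [zero_mul, AddChar.map_zero_eq_one]
    rw [Finset.sum_const, Finset.card_univ, card_sym, nsmul_eq_mul, mul_one]
  calc (Fintype.card F : ℂ) * Qcount F m z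
      = ∑ s : Sym F m, (if (s : Multiset F).sum - z = 0 then (Fintype.card F : ℂ) else 0) := by
        simp only [sub_eq_zero]
        rw [Finset.sum_ite, Finset.sum_const, Finset.sum_const_zero, add_zero, nsmul_eq_mul]
        rw [Qcount]
        push_cast
        ring
    _ = ∑ s : Sym F m, ∑ x : F, ψ₀ (x * ((s : Multiset F).sum - z)) := by
        apply Finset.sum_congr rfl
        intro s _
        rw [horth]
    _ = ∑ x : F, ∑ s : Sym F m, ψ₀ (x * (s : Multiset F).sum) * ψ₀ (x * (-z)) := by
        rw [Finset.sum_comm]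
        apply Finset.sum_congr rfl
        intro x _
        apply Finset.sum_congr rfl
        intro s _
        rw [← AddChar.map_add_eq_mul]
        congr 1
        ring
    _ = ∑ x : F, (∑ s : Sym F m, ψ₀ (x * (s : Multiset F).sum)) * ψ₀ (x * (-z)) := by
        apply Finset.sum_congr rfl
        intro x _
        rw [Finset.sum_mul]
    _ = (∑ s : Sym F m, ψ₀ ((0 : F) * (s : Multiset F).sum)) * ψ₀ ((0 : F) * (-z))
        + ∑ x ∈ Finset.univ.erase 0,
            (∑ s : Sym F m, ψ₀ (x * (s : Multiset F).sum)) * ψ₀ (x * (-z)) := by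
        exact (Finset.add_sum_erase _ _ (Finset.mem_univ (0 : F))).symm
    _ = ((Fintype.card F + m - 1).choose m : ℂ)
        + (cN p (Fintype.card F) m : ℂ) * ((∑ x : F, ψ₀ (x * (-z))) - 1) := by
        rw [hS0, zero_mul, AddChar.map_zero_eq_one, mul_one]
        congr 1
        have hterm : ∀ x ∈ Finset.univ.erase (0 : F),
            (∑ s : Sym F m, ψ₀ (x * (s : Multiset F).sum)) * ψ₀ (x * (-z))
              = (cN p (Fintype.card F) m : ℂ) * ψ₀ (x * (-z)) := by
          intro x hx
          rw [hS x (Finset.ne_of_mem_erase hx)]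
        rw [Finset.sum_congr rfl hterm, ← Finset.mul_sum]
        have hsplit2 := Finset.add_sum_erase Finset.univ (fun x : F => ψ₀ (x * (-z)))
          (Finset.mem_univ (0 : F))
        simp only [zero_mul, AddChar.map_zero_eq_one] at hsplit2
        linear_combination (cN p (Fintype.card F) m : ℂ) * hsplit2
    _ = ((Fintype.card F + m - 1).choose m : ℂ)
        + ((if z = 0 then (Fintype.card F : ℂ) else 0) - 1) * (cN p (Fintype.card F) m : ℂ) := by
        rw [horth (-z)]
        simp only [neg_eq_zero]
        ring

lemma Q_split (m : ℕ) (z : F) :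
    Qcount F (m + 1) z = partitionCount F (m + 1) z + Qcount F m z := by
  classical
  have hsplit := Finset.card_filter_add_card_filter_not
    (s := Finset.univ.filter fun s : Sym F (m+1) => (s : Multiset F).sum = z)
    (p := fun s : Sym F (m+1) => (0 : F) ∉ (s : Multiset F))
  rw [Finset.filter_filter, Finset.filter_filter] at hsplit
  have e1 : (Finset.univ.filter fun s : Sym F (m+1) =>
      (s : Multiset F).sum = z ∧ (0 : F) ∉ (s : Multiset F))
      = Finset.univ.filter fun s : Sym F (m+1) =>
      (0 : F) ∉ (s : Multiset F) ∧ (s : Multiset F).sum = z := by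
    apply Finset.filter_congr
    intro s _
    exact and_comm
  have e2 : (Finset.univ.filter fun s : Sym F (m+1) =>
      (s : Multiset F).sum = z ∧ ¬ (0 : F) ∉ (s : Multiset F)).card
      = (Finset.univ.filter fun t : Sym F m => (t : Multiset F).sum = z).card := by
    have hmem : ∀ s : Sym F (m+1), s ∈ Finset.univ.filter (fun s : Sym F (m+1) =>
        (s : Multiset F).sum = z ∧ ¬ (0 : F) ∉ (s : Multiset F)) →
        (0 : F) ∈ (s : Multiset F) := by
      intro s hs
      exact not_not.1 (Finset.mem_filter.1 hs).2.2
    refine Finset.card_bij'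
      (fun (s : Sym F (m+1)) hs => (⟨(s : Multiset F).erase 0, by
        rw [Multiset.card_erase_of_mem (hmem s hs), Sym.card_coe]
        rfl⟩ : Sym F m))
      (fun (t : Sym F m) ht => (⟨(0 : F) ::ₘ (t : Multiset F), by
        rw [Multiset.card_cons, Sym.card_coe]⟩ : Sym F (m+1))) ?_ ?_ ?_ ?_
    · intro s hs
      have hmem' : (0 : F) ∈ (s : Multiset F) := hmem s hs
      rw [Finset.mem_filter] at hs
      refine Finset.mem_filter.2 ⟨Finset.mem_univ _, ?_⟩
      have hc : (0 : F) ::ₘ (s : Multiset F).erase 0 = (s : Multiset F) :=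
        Multiset.cons_erase hmem'
      have hsum := congrArg Multiset.sum hc
      rw [Multiset.sum_cons, zero_add] at hsum
      show ((s : Multiset F).erase 0).sum = z
      rw [hsum]
      exact hs.2.1
    · intro t ht
      rw [Finset.mem_filter] at ht
      refine Finset.mem_filter.2 ⟨Finset.mem_univ _, ?_, ?_⟩
      · show ((0 : F) ::ₘ (t : Multiset F)).sum = z
        rw [Multiset.sum_cons, zero_add]
        exact ht.2
      · show ¬ (0 : F) ∉ ((0 : F) ::ₘ (t : Multiset F))
        simp [Multiset.mem_cons]
    · intro s hs
      apply Subtype.ext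
      show (0 : F) ::ₘ ((s : Multiset F).erase 0) = (s : Multiset F)
      exact Multiset.cons_erase (hmem s hs)
    · intro t ht
      apply Subtype.ext
      show ((0 : F) ::ₘ (t : Multiset F)).erase 0 = (t : Multiset F)
      exact Multiset.erase_cons_head 0 (t : Multiset F)
  rw [e1, e2] at hsplit
  simp only [Qcount, partitionCount]
  omega

lemma master_P (m : ℕ) (z : F) (hm : 1 ≤ m) :
    (Fintype.card F : ℂ) * partitionCount F m z
      = ((Fintype.card F + m - 2).choose m : ℂ)
        + ((if z = 0 then (Fintype.card F : ℂ) else 0) - 1)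
          * ((cN p (Fintype.card F) m : ℂ) - (cN p (Fintype.card F) (m-1) : ℂ)) := by
  obtain ⟨m', rfl⟩ : ∃ m', m = m' + 1 := ⟨m - 1, by omega⟩
  have h1 := master_Q (F := F) (p := p) (m' + 1) z
  have h2 := master_Q (F := F) (p := p) m' z
  have h3 : Qcount F (m'+1) z = partitionCount F (m'+1) z + Qcount F m' z := Q_split m' z
  have hq1 : 1 ≤ Fintype.card F := Fintype.card_pos
  have hpas : ((Fintype.card F + (m'+1) - 1).choose (m'+1) : ℂ)
      = ((Fintype.card F + (m'+1) - 2).choose (m'+1) : ℂ)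
        + ((Fintype.card F + m' - 1).choose m' : ℂ) := by
    have e1 : Fintype.card F + (m'+1) - 1 = (Fintype.card F + m' - 1) + 1 := by omega
    have e2 : Fintype.card F + (m'+1) - 2 = Fintype.card F + m' - 1 := by omega
    have := Nat.choose_succ_succ' (Fintype.card F + m' - 1) m'
    rw [e1, e2]
    rw [this]
    push_cast
    ring
  have hcast : (Fintype.card F : ℂ) * partitionCount F (m'+1) z
      = (Fintype.card F : ℂ) * Qcount F (m'+1) z
        - (Fintype.card F : ℂ) * Qcount F m' z := by
    rw [h3]; push_cast; ring
  rw [hcast, h1, h2, hpas]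
  have e3 : m' + 1 - 1 = m' := rfl
  rw [e3]
  ring

lemma partitionCount_zero (z : F) :
    partitionCount F 0 z = if z = 0 then 1 else 0 := by
  classical
  rw [partitionCount]
  have hcond : ∀ s : Sym F 0,
      ((0 : F) ∉ (s : Multiset F) ∧ (s : Multiset F).sum = z) ↔ (z = 0) := by
    intro s
    have h0 : (s : Multiset F) = 0 := Multiset.card_eq_zero.1 s.2
    rw [h0]
    simp [eq_comm]
  rw [Finset.filter_congr (fun s _ => by rw [hcond s])]
  by_cases hz : z = 0
  · rw [if_pos hz, Finset.filter_true_of_mem (fun _ _ => hz), Finset.card_univ, card_sym]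
    simp
  · rw [if_neg hz, Finset.filter_false_of_mem (fun _ _ => hz), Finset.card_empty]

lemma cN_of_not_dvd {p q m : ℕ} (h : ¬ p ∣ m) : cN p q m = 0 := if_neg h

lemma cN_of_dvd {p q m : ℕ} (h : p ∣ m) :
    cN p q m = (q / p - 1 + m / p).choose (m / p) := if_pos h

end PartitionCountAux

open PartitionCountAux in
theorem stmt_3 (F : Type*) [Field F] [Fintype F] [DecidableEq F]
    (p : ℕ) [Fact p.Prime] [CharP F p] (q : ℕ) (hq : q = Fintype.card F)
    (m : ℕ) (z : F) :
    (¬ m % p = 0 → ¬ m % p = 1 →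
      (partitionCount F m z : ℚ) = (Nat.choose (q + m - 2) m : ℚ) / q) ∧
    (∀ j : ℕ, m = j * p →
      (z = 0 →
        (partitionCount F m z : ℚ) = (Nat.choose (q + m - 2) m : ℚ) / q
          + (q - 1) / q * (Nat.choose (q / p - 1 + j) j : ℚ)) ∧
      (z ≠ 0 →
        (partitionCount F m z : ℚ) = (Nat.choose (q + m - 2) m : ℚ) / q
          - (1 / q) * (Nat.choose (q / p - 1 + j) j : ℚ))) ∧
    (∀ j : ℕ, m = j * p + 1 →
      (z = 0 →
        (partitionCount F m z : ℚ) = (Nat.choose (q + m - 2) m : ℚ) / q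
          - (q - 1) / q * (Nat.choose (q / p - 1 + j) j : ℚ)) ∧
      (z ≠ 0 →
        (partitionCount F m z : ℚ) = (Nat.choose (q + m - 2) m : ℚ) / q
          + (1 / q) * (Nat.choose (q / p - 1 + j) j : ℚ))) := by
  have hp2 : 2 ≤ p := (Fact.out : p.Prime).two_le
  subst hq
  have hq1 : 1 ≤ Fintype.card F := Fintype.card_pos
  have hq0C : ((Fintype.card F : ℕ) : ℂ) ≠ 0 := Nat.cast_ne_zero.2 (by omega)
  have hq0Q : ((Fintype.card F : ℕ) : ℚ) ≠ 0 := Nat.cast_ne_zero.2 (by omega)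
  refine ⟨?_, ?_, ?_⟩
  · -- m ≢ 0, 1 (mod p)
    intro h0 h1
    have hm : 1 ≤ m := by
      rcases Nat.eq_zero_or_pos m with rfl | h
      · simp at h0
      · exact h
    have hc1 : ¬ p ∣ m := by
      rintro ⟨k, rfl⟩
      exact h0 (Nat.mul_mod_right p k)
    have hc2 : ¬ p ∣ (m - 1) := by
      rintro ⟨k, hk⟩
      apply h1
      have hm1 : m = p * k + 1 := by omega
      rw [hm1, Nat.mul_add_mod]
      exact Nat.mod_eq_of_lt (by omega)
    have hC := master_P (F := F) (p := p) m z hm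
    rw [cN_of_not_dvd hc1, cN_of_not_dvd hc2] at hC
    have hC2 : ((Fintype.card F : ℕ) : ℂ) * partitionCount F m z
        = ((Fintype.card F + m - 2).choose m : ℂ) := by
      rw [hC]; push_cast; ring
    have hQ : (partitionCount F m z : ℚ) * (Fintype.card F : ℕ)
        = ((Fintype.card F + m - 2).choose m : ℚ) := by
      have h3 : (((partitionCount F m z : ℚ) * (Fintype.card F : ℕ) : ℚ) : ℂ)
          = ((((Fintype.card F + m - 2).choose m : ℚ)) : ℂ) := by
        push_cast
        linear_combination hC2
      exact_mod_cast h3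
    rw [eq_div_iff hq0Q]
    exact hQ
  · -- m = j * p
    intro j hj
    rcases Nat.eq_zero_or_pos j with rfl | hjpos
    · have hm0 : m = 0 := by omega
      subst hm0
      constructor
      · intro hz
        rw [partitionCount_zero, if_pos hz]
        simp only [Nat.add_zero, Nat.choose_zero_right, Nat.zero_div, Nat.cast_one]
        rw [eq_comm]
        field_simp
        ring
      · intro hz
        rw [partitionCount_zero, if_neg hz]
        simp only [Nat.add_zero, Nat.choose_zero_right, Nat.zero_div, Nat.cast_one]
        push_cast
        ring
    · have hple : p ≤ j * p := Nat.le_mul_of_pos_left p hjpos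
      have hm : 1 ≤ m := by omega
      have hdvd : p ∣ m := ⟨j, by rw [hj]; ring⟩
      have hmp : m / p = j := by rw [hj, mul_comm]; exact Nat.mul_div_cancel_left j (by omega)
      have hnd : ¬ p ∣ (m - 1) := by
        intro hd2
        have h1 := Nat.dvd_sub hdvd hd2
        rw [show m - (m - 1) = 1 by omega] at h1
        have := Nat.le_of_dvd one_pos h1
        omega
      have hC := master_P (F := F) (p := p) m z hm
      rw [cN_of_not_dvd hnd, cN_of_dvd hdvd, hmp] at hC
      constructor
      · intro hz
        rw [if_pos hz] at hC
        have hQ : (partitionCount F m z : ℚ) * (Fintype.card F : ℕ)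
            = ((Fintype.card F + m - 2).choose m : ℚ)
              + (((Fintype.card F : ℕ) : ℚ) - 1) * ((Fintype.card F / p - 1 + j).choose j : ℚ) := by
          have h3 : (((partitionCount F m z : ℚ) * (Fintype.card F : ℕ) : ℚ) : ℂ)
              = ((((Fintype.card F + m - 2).choose m : ℚ)
                + (((Fintype.card F : ℕ) : ℚ) - 1)
                  * ((Fintype.card F / p - 1 + j).choose j : ℚ) : ℚ) : ℂ) := by
            push_cast
            linear_combination hC
          exact_mod_cast h3
        have h4 : (partitionCount F m z : ℚ)
            = (((Fintype.card F + m - 2).choose m : ℚ)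
              + (((Fintype.card F : ℕ) : ℚ) - 1)
                * ((Fintype.card F / p - 1 + j).choose j : ℚ)) / (Fintype.card F : ℕ) := by
          rw [eq_div_iff hq0Q]
          exact hQ
        rw [h4]
        ring
      · intro hz
        rw [if_neg hz] at hC
        have hQ : (partitionCount F m z : ℚ) * (Fintype.card F : ℕ)
            = ((Fintype.card F + m - 2).choose m : ℚ)
              - ((Fintype.card F / p - 1 + j).choose j : ℚ) := by
          have h3 : (((partitionCount F m z : ℚ) * (Fintype.card F : ℕ) : ℚ) : ℂ)
              = ((((Fintype.card F + m - 2).choose m : ℚ)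
                - ((Fintype.card F / p - 1 + j).choose j : ℚ) : ℚ) : ℂ) := by
            push_cast
            linear_combination hC
          exact_mod_cast h3
        have h4 : (partitionCount F m z : ℚ)
            = (((Fintype.card F + m - 2).choose m : ℚ)
              - ((Fintype.card F / p - 1 + j).choose j : ℚ)) / (Fintype.card F : ℕ) := by
          rw [eq_div_iff hq0Q]
          exact hQ
        rw [h4]
        ring
  · -- m = j * p + 1
    intro j hj
    have hm : 1 ≤ m := by omega
    have he : m - 1 = j * p := by omega
    have hd1 : p ∣ (m - 1) := ⟨j, by rw [he]; ring⟩
    have hnd : ¬ p ∣ m := by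
      intro hd2
      have h1 := Nat.dvd_sub hd2 hd1
      rw [show m - (m - 1) = 1 by omega] at h1
      have := Nat.le_of_dvd one_pos h1
      omega
    have hmp : (m - 1) / p = j := by
      rw [he, mul_comm]
      exact Nat.mul_div_cancel_left j (by omega)
    have hC := master_P (F := F) (p := p) m z hm
    rw [cN_of_not_dvd hnd, cN_of_dvd hd1, hmp] at hC
    constructor
    · intro hz
      rw [if_pos hz] at hC
      have hQ : (partitionCount F m z : ℚ) * (Fintype.card F : ℕ)
          = ((Fintype.card F + m - 2).choose m : ℚ)
            - (((Fintype.card F : ℕ) : ℚ) - 1) * ((Fintype.card F / p - 1 + j).choose j : ℚ) := by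
        have h3 : (((partitionCount F m z : ℚ) * (Fintype.card F : ℕ) : ℚ) : ℂ)
            = ((((Fintype.card F + m - 2).choose m : ℚ)
              - (((Fintype.card F : ℕ) : ℚ) - 1)
                * ((Fintype.card F / p - 1 + j).choose j : ℚ) : ℚ) : ℂ) := by
          push_cast
          linear_combination hC
        exact_mod_cast h3
      have h4 : (partitionCount F m z : ℚ)
          = (((Fintype.card F + m - 2).choose m : ℚ)
            - (((Fintype.card F : ℕ) : ℚ) - 1)
              * ((Fintype.card F / p - 1 + j).choose j : ℚ)) / (Fintype.card F : ℕ) := by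
        rw [eq_div_iff hq0Q]
        exact hQ
      rw [h4]
      ring
    · intro hz
      rw [if_neg hz] at hC
      have hQ : (partitionCount F m z : ℚ) * (Fintype.card F : ℕ)
          = ((Fintype.card F + m - 2).choose m : ℚ)
            + ((Fintype.card F / p - 1 + j).choose j : ℚ) := by
        have h3 : (((partitionCount F m z : ℚ) * (Fintype.card F : ℕ) : ℚ) : ℂ)
            = ((((Fintype.card F + m - 2).choose m : ℚ)
              + ((Fintype.card F / p - 1 + j).choose j : ℚ) : ℚ) : ℂ) := by
          push_cast
          linear_combination hC
        exact_mod_cast h3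
      have h4 : (partitionCount F m z : ℚ)
          = (((Fintype.card F + m - 2).choose m : ℚ)
            + ((Fintype.card F / p - 1 + j).choose j : ℚ)) / (Fintype.card F : ℕ) := by
        rw [eq_div_iff hq0Q]
        exact hQ
      rw [h4]
      ring
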